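/- arXiv:1504.02544 — 6 statements merged into one kernel-verified Lean document; each statement's English description precedes it below -/
import Mathlib

section
/- Let x_1 = (r, sqrt(1-r^2), 0, ..., 0) and x_2 = (r, -sqrt(1-r^2), 0, ..., 0) be points on S^{d-1} with -1 < r < 1, and let x_1' = (r, 0, ..., 0, sqrt(1-r^2)), x_2' = (r, 0, ..., 0, -sqrt(1-r^2)). Then for any unit vector y = (c_1,...,c_{d-1}, 0) on S^{d-1} with last coordinate zero, |y - x_1|^2 |y - x_2|^2 = (2 - 2 c_1 r)^2 - 4 c_2^2 (1 - r^2) ≤ (2 - 2 c_1 r)^2 = |y - x_1'|^2 |y - x_2'|^2, with equality if and only if c_2 = 0. -/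
lemma sum_two_ite {d : ℕ} (a b : Fin d) (hab : a ≠ b) (f g : Fin d → ℝ) :
    ∑ i, (if i = a then f i else if i = b then g i else 0) = f a + g b := by
  have h : ∀ i : Fin d, (if i = a then f i else if i = b then g i else 0)
      = (if i = a then f i else 0) + (if i = b then g i else 0) := by
    intro i
    by_cases h1 : i = a
    · subst h1; simp [hab]
    · by_cases h2 : i = b <;> simp [h1, h2, Ne.symm hab]
  simp_rw [h, Finset.sum_add_distrib, Finset.sum_ite_eq', Finset.mem_univ, if_true]

lemma norm_sub_sq_calc {d : ℕ} (a b : Fin d) (hab : a ≠ b) (p q : ℝ)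
    (y x : EuclideanSpace ℝ (Fin d))
    (hx : ∀ i, x i = if i = a then p else if i = b then q else 0)
    (hy : ‖y‖ = 1) :
    ‖y - x‖ ^ 2 = 1 - 2 * (y a * p + y b * q) + (p ^ 2 + q ^ 2) := by
  have hy2 : ∑ i, y i ^ 2 = 1 := by
    have h := EuclideanSpace.norm_eq y
    rw [hy] at h
    have := congrArg (· ^ 2) h.symm
    simpa [Real.sq_sqrt (Finset.sum_nonneg fun i _ => sq_nonneg (y i))] using this
  have hsub : ‖y - x‖ ^ 2 = ∑ i, (y i - x i) ^ 2 := by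
    rw [EuclideanSpace.norm_eq]
    rw [Real.sq_sqrt (Finset.sum_nonneg fun i _ => sq_nonneg _)]
    refine Finset.sum_congr rfl fun i _ => ?_
    simp [PiLp.sub_apply, sq_abs]
  rw [hsub]
  have hexp : ∀ i, (y i - x i) ^ 2 = y i ^ 2 - 2 * (y i * x i) + x i ^ 2 := fun i => by ring
  simp_rw [hexp, Finset.sum_add_distrib, Finset.sum_sub_distrib, hy2]
  have h1 : ∑ i, y i * x i = y a * p + y b * q := by
    have : ∀ i, y i * x i = if i = a then y i * p else if i = b then y i * q else 0 := by
      intro i; rw [hx i]; split_ifs <;> ring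
    simp_rw [this]
    exact sum_two_ite a b hab _ _
  have h2 : ∑ i, x i ^ 2 = p ^ 2 + q ^ 2 := by
    have : ∀ i, x i ^ 2 = if i = a then p ^ 2 else if i = b then q ^ 2 else 0 := by
      intro i; rw [hx i]; split_ifs <;> ring
    simp_rw [this]
    exact sum_two_ite a b hab _ _
  rw [← Finset.mul_sum, h1, h2]

/-- The key perturbation inequality in the monotonicity theorem: rotating the pair
`x_1, x_2` out of the degenerate hyperplane strictly increases the distance product to
any point `y` of the configuration with nonzero second coordinate. -/
theorem perturbation_inequality (d : ℕ) (hd : 3 ≤ d) (r : ℝ) (hr₁ : -1 < r) (hr₂ : r < 1)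
    (x₁ x₂ x₁' x₂' : EuclideanSpace ℝ (Fin d))
    (hx₁ : ∀ i : Fin d, x₁ i = if (i : ℕ) = 0 then r
      else if (i : ℕ) = 1 then Real.sqrt (1 - r ^ 2) else 0)
    (hx₂ : ∀ i : Fin d, x₂ i = if (i : ℕ) = 0 then r
      else if (i : ℕ) = 1 then -Real.sqrt (1 - r ^ 2) else 0)
    (hx₁' : ∀ i : Fin d, x₁' i = if (i : ℕ) = 0 then r
      else if (i : ℕ) = d - 1 then Real.sqrt (1 - r ^ 2) else 0)
    (hx₂' : ∀ i : Fin d, x₂' i = if (i : ℕ) = 0 then r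
      else if (i : ℕ) = d - 1 then -Real.sqrt (1 - r ^ 2) else 0)
    (y : EuclideanSpace ℝ (Fin d)) (hy : ‖y‖ = 1)
    (hylast : y ⟨d - 1, by omega⟩ = 0) :
    ‖y - x₁‖ ^ 2 * ‖y - x₂‖ ^ 2
        = (2 - 2 * y ⟨0, by omega⟩ * r) ^ 2
          - 4 * (y ⟨1, by omega⟩) ^ 2 * (1 - r ^ 2) ∧
      ‖y - x₁‖ ^ 2 * ‖y - x₂‖ ^ 2 ≤ (2 - 2 * y ⟨0, by omega⟩ * r) ^ 2 ∧
      (2 - 2 * y ⟨0, by omega⟩ * r) ^ 2 = ‖y - x₁'‖ ^ 2 * ‖y - x₂'‖ ^ 2 ∧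
      (‖y - x₁‖ ^ 2 * ‖y - x₂‖ ^ 2 = ‖y - x₁'‖ ^ 2 * ‖y - x₂'‖ ^ 2 ↔
        y ⟨1, by omega⟩ = 0) := by
  set s := Real.sqrt (1 - r ^ 2) with hs
  have h1r : (0:ℝ) < 1 - r ^ 2 := by nlinarith
  have hs2 : s ^ 2 = 1 - r ^ 2 := Real.sq_sqrt h1r.le
  set i0 : Fin d := ⟨0, by omega⟩ with hi0
  set i1 : Fin d := ⟨1, by omega⟩ with hi1
  set iD : Fin d := ⟨d - 1, by omega⟩ with hiD
  have h01 : i0 ≠ i1 := by simp [hi0, hi1, Fin.ext_iff]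
  have h0D : i0 ≠ iD := by simp [hi0, hiD, Fin.ext_iff]; omega
  have conv1 : ∀ i : Fin d, ((i : ℕ) = 0) = (i = i0) := fun i => by
    simp [hi0, Fin.ext_iff]
  have conv2 : ∀ i : Fin d, ((i : ℕ) = 1) = (i = i1) := fun i => by
    simp [hi1, Fin.ext_iff]
  have convD : ∀ i : Fin d, ((i : ℕ) = d - 1) = (i = iD) := fun i => by
    simp [hiD, Fin.ext_iff]
  have n1 : ‖y - x₁‖ ^ 2 = 2 - 2 * (y i0 * r + y i1 * s) := by
    rw [norm_sub_sq_calc i0 i1 h01 r s y x₁ (fun i => by simp only [hx₁ i, conv1, conv2]) hy]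
    nlinarith
  have n2 : ‖y - x₂‖ ^ 2 = 2 - 2 * (y i0 * r + y i1 * (-s)) := by
    rw [norm_sub_sq_calc i0 i1 h01 r (-s) y x₂ (fun i => by simp only [hx₂ i, conv1, conv2]) hy]
    nlinarith
  have n1' : ‖y - x₁'‖ ^ 2 = 2 - 2 * (y i0 * r) := by
    rw [norm_sub_sq_calc i0 iD h0D r s y x₁' (fun i => by simp only [hx₁' i, conv1, convD]) hy]
    rw [hylast]; nlinarith
  have n2' : ‖y - x₂'‖ ^ 2 = 2 - 2 * (y i0 * r) := by
    rw [norm_sub_sq_calc i0 iD h0D r (-s) y x₂' (fun i => by simp only [hx₂' i, conv1, convD]) hy]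
    rw [hylast]; nlinarith
  have key : ‖y - x₁‖ ^ 2 * ‖y - x₂‖ ^ 2
      = (2 - 2 * y i0 * r) ^ 2 - 4 * (y i1) ^ 2 * (1 - r ^ 2) := by
    rw [n1, n2, ← hs2]; ring
  have key' : (2 - 2 * y i0 * r) ^ 2 = ‖y - x₁'‖ ^ 2 * ‖y - x₂'‖ ^ 2 := by
    rw [n1', n2']; ring
  refine ⟨key, ?_, key', ?_⟩
  · rw [key]; nlinarith [sq_nonneg (y i1)]
  · rw [key, ← key']
    constructor
    · intro h
      have : (y i1) ^ 2 = 0 := by nlinarith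
      exact pow_eq_zero_iff (by norm_num) |>.mp this
    · intro h; rw [h]; ring
end

section
/- The function F'(x) = (2x+1)(ln x - ln(x+1)) + 1 is strictly increasing on [1, ∞). -/
open Real Set

lemma aux_log_lt {v : ℝ} (hv : 1 < v) : Real.log v < (v - 1 / v) / 2 := by
  have h0 : (0:ℝ) < v := by linarith
  have hmono : StrictMonoOn (fun x : ℝ => (x - 1 / x) / 2 - Real.log x) (Set.Ici 1) := by
    apply strictMonoOn_of_deriv_pos (convex_Ici 1)
    · apply ContinuousOn.sub
      · exact (continuousOn_id.sub (continuousOn_const.div continuousOn_id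
          (fun x hx => by simp at hx; positivity))).div_const 2
      · exact Real.continuousOn_log.mono (fun x hx => by
          simp at hx ⊢; positivity)
    · intro x hx
      rw [interior_Ici] at hx
      have hx0 : (0:ℝ) < x := by simp at hx; linarith
      have hinv : HasDerivAt (fun x : ℝ => 1 / x) (-1 / x ^ 2) x := by
        simpa [one_div] using (hasDerivAt_id x).fun_inv hx0.ne'
      have hd : HasDerivAt (fun x : ℝ => (x - 1 / x) / 2 - Real.log x)
          ((1 - -1 / x ^ 2) / 2 - 1 / x) x := by
        simpa [one_div] using (((hasDerivAt_id x).sub hinv).div_const 2).fun_sub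
          (Real.hasDerivAt_log hx0.ne')
      rw [hd.deriv]
      have : (1 - -1 / x ^ 2) / 2 - 1 / x = (x - 1) ^ 2 / (2 * x ^ 2) := by
        field_simp; ring
      rw [this]
      have : (0:ℝ) < (x - 1) ^ 2 := by
        have : x - 1 ≠ 0 := by simp at hx; intro h; linarith
        positivity
      positivity
  have := hmono (Set.self_mem_Ici) (Set.mem_Ici.mpr hv.le) hv
  simp [Real.log_one, one_div] at this ⊢
  linarith

/-- The derivative `F'(x) = (2x+1)(ln x - ln(x+1)) + 1` of
`F(x) = x(x+1)(ln x - ln(x+1))` is strictly increasing on `[1, ∞)`. -/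
theorem F_prime_strictMonoOn :
    StrictMonoOn (fun x : ℝ => (2 * x + 1) * (Real.log x - Real.log (x + 1)) + 1)
      (Set.Ici 1) := by
  apply strictMonoOn_of_deriv_pos (convex_Ici 1)
  · apply ContinuousOn.add _ continuousOn_const
    apply ContinuousOn.mul (by fun_prop)
    apply ContinuousOn.sub
    · exact Real.continuousOn_log.mono (fun x hx => by simp at hx ⊢; linarith)
    · exact Real.continuousOn_log.comp (by fun_prop) (fun x hx => by simp at hx ⊢; linarith)
  · intro x hx
    rw [interior_Ici] at hx
    have hx1 : (1:ℝ) < x := hx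
    have hx0 : (0:ℝ) < x := by linarith
    have hx10 : (0:ℝ) < x + 1 := by linarith
    have hd : HasDerivAt (fun x : ℝ => (2 * x + 1) * (Real.log x - Real.log (x + 1)) + 1)
        (2 * (Real.log x - Real.log (x + 1)) + (2 * x + 1) * (1 / x - 1 / (x + 1))) x := by
      have h1 : HasDerivAt (fun x : ℝ => 2 * x + 1) 2 x := by
        simpa using ((hasDerivAt_id x).const_mul 2).add_const 1
      have h2 : HasDerivAt (fun x : ℝ => Real.log x - Real.log (x + 1))
          (1 / x - 1 / (x + 1)) x := by
        have hl1 : HasDerivAt Real.log (1 / x) x := by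
          simpa [one_div] using Real.hasDerivAt_log hx0.ne'
        have hl2 : HasDerivAt (fun x : ℝ => Real.log (x + 1)) (1 / (x + 1)) x := by
          have : HasDerivAt (fun x : ℝ => x + 1) 1 x := (hasDerivAt_id x).add_const 1
          simpa [one_div, Function.comp_def] using (Real.hasDerivAt_log hx10.ne').comp x this
        exact hl1.sub hl2
      simpa [mul_comm] using (h1.mul h2).add_const 1
    rw [hd.deriv]
    -- key inequality: 2 * (log (x+1) - log x) < (2x+1)*(1/x - 1/(x+1))
    set v := (x + 1) / x with hv_def
    have hv : 1 < v := by
      rw [hv_def, lt_div_iff₀ hx0]; linarith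
    have hkey := aux_log_lt hv
    have hlog : Real.log v = Real.log (x + 1) - Real.log x :=
      Real.log_div hx10.ne' hx0.ne'
    have hval : (v - 1 / v) / 2 = (2 * x + 1) / (2 * x * (x + 1)) := by
      rw [hv_def]; field_simp; ring
    rw [hlog, hval] at hkey
    have hrw : (2 * x + 1) * (1 / x - 1 / (x + 1)) = (2 * x + 1) / (x * (x + 1)) := by
      field_simp; ring
    rw [hrw]
    have h2 : 2 * (Real.log (x + 1) - Real.log x) < (2 * x + 1) / (x * (x + 1)) := by
      have : 2 * ((2 * x + 1) / (2 * x * (x + 1))) = (2 * x + 1) / (x * (x + 1)) := by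
        field_simp
      linarith [mul_lt_mul_of_pos_left hkey (by norm_num : (0:ℝ) < 2), this.ge, this.le]
    linarith
end

section
/- Define G(x) = F(x) - F(x+1) where F(x) = x(x+1)(ln x - ln(x+1)). Then G is strictly decreasing on [1, ∞); in particular G(2k) < G(k-1) for every integer k ≥ 2. -/
open Real Set

lemma keyA {t : ℝ} (ht : 1 < t) : Real.log t < (t - t⁻¹) / 2 := by
  have h : StrictMonoOn (fun t : ℝ => (t - t⁻¹) / 2 - Real.log t) (Set.Ici 1) := by
    apply strictMonoOn_of_deriv_pos (convex_Ici 1)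
    · apply ContinuousOn.sub
      · exact ((continuousOn_id.sub (continuousOn_inv₀.mono (by
          intro x hx; simp only [Set.mem_Ici] at hx
          simp only [Set.mem_compl_iff, Set.mem_singleton_iff]; positivity))).div_const 2)
      · exact Real.continuousOn_log.mono (by
          intro x hx; simp only [Set.mem_Ici] at hx
          simp only [Set.mem_compl_iff, Set.mem_singleton_iff]; positivity)
    · intro x hx
      rw [interior_Ici] at hx
      have hx' : 1 < x := Set.mem_Ioi.mp hx
      have hx0 : (0:ℝ) < x := lt_trans one_pos hx'
      have hd : HasDerivAt (fun t : ℝ => (t - t⁻¹) / 2 - Real.log t)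
          ((1 - (-(x ^ 2)⁻¹)) / 2 - x⁻¹) x :=
        (((hasDerivAt_id x).sub (hasDerivAt_inv hx0.ne')).div_const 2).sub
          (Real.hasDerivAt_log hx0.ne')
      rw [hd.deriv]
      have h1 : (0:ℝ) < x - 1 := by linarith
      have : (1 - (-(x ^ 2)⁻¹)) / 2 - x⁻¹ = (x - 1) ^ 2 / (2 * x ^ 2) := by
        field_simp; ring
      rw [this]; positivity
  have := h Set.self_mem_Ici (Set.mem_Ici.mpr ht.le) ht
  simp only [Real.log_one, inv_one] at this
  linarith

lemma hAnti : StrictAntiOn (fun x : ℝ => (2 * x + 1) * (Real.log (x + 1) - Real.log x))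
    (Set.Ici 1) := by
  apply strictAntiOn_of_deriv_neg (convex_Ici 1)
  · apply ContinuousOn.mul
    · fun_prop
    · apply ContinuousOn.sub
      · exact Real.continuousOn_log.comp (by fun_prop) (by
          intro x hx; simp only [Set.mem_Ici] at hx
          simp only [Set.mem_compl_iff, Set.mem_singleton_iff]; positivity)
      · exact Real.continuousOn_log.mono (by
          intro x hx; simp only [Set.mem_Ici] at hx
          simp only [Set.mem_compl_iff, Set.mem_singleton_iff]; positivity)
  · intro x hx
    rw [interior_Ici] at hx
    have hx' : 1 < x := Set.mem_Ioi.mp hx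
    have hx0 : (0:ℝ) < x := lt_trans one_pos hx'
    have hx1 : (0:ℝ) < x + 1 := by linarith
    have hL1 : HasDerivAt (fun x : ℝ => Real.log (x + 1)) (x + 1)⁻¹ x := by
      simpa [Function.comp_def] using (Real.hasDerivAt_log hx1.ne').comp x ((hasDerivAt_id x).add_const 1)
    have hd : HasDerivAt (fun x : ℝ => (2 * x + 1) * (Real.log (x + 1) - Real.log x))
        (2 * (Real.log (x + 1) - Real.log x) + (2 * x + 1) * ((x + 1)⁻¹ - x⁻¹)) x := by
      have h2 : HasDerivAt (fun x : ℝ => 2 * x + 1) 2 x := by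
        simpa using ((hasDerivAt_id x).const_mul 2).add_const 1
      exact (h2.mul (hL1.sub (Real.hasDerivAt_log hx0.ne'))).congr_deriv (by simp only [Pi.sub_apply])
    rw [hd.deriv]
    have ht : (1:ℝ) < (x + 1) / x := by
      rw [lt_div_iff₀ hx0]; linarith
    have hk := keyA ht
    rw [Real.log_div hx1.ne' hx0.ne'] at hk
    have he : ((x + 1) / x - ((x + 1) / x)⁻¹) / 2 = (2 * x + 1) / (2 * x * (x + 1)) := by
      rw [inv_div]; field_simp; ring
    rw [he] at hk
    have he2 : (2 * x + 1) * ((x + 1)⁻¹ - x⁻¹) = -(2 * ((2 * x + 1) / (2 * x * (x + 1)))) := by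
      field_simp; ring
    rw [he2]
    linarith [hk]

/-- `G(x) = F(x) - F(x+1)`, where `F(x) = x(x+1)(ln x - ln(x+1))`, is strictly
decreasing on `[1, ∞)`; in particular `G(2k) < G(k-1)` for every integer `k ≥ 2`. -/
theorem G_strictAntiOn :
    StrictAntiOn (fun x : ℝ =>
        (x * (x + 1) * (Real.log x - Real.log (x + 1)))
          - ((x + 1) * (x + 2) * (Real.log (x + 1) - Real.log (x + 2))))
      (Set.Ici 1) ∧
    ∀ k : ℕ, 2 ≤ k →
      (fun x : ℝ =>
        (x * (x + 1) * (Real.log x - Real.log (x + 1)))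
          - ((x + 1) * (x + 2) * (Real.log (x + 1) - Real.log (x + 2)))) (2 * k)
      < (fun x : ℝ =>
        (x * (x + 1) * (Real.log x - Real.log (x + 1)))
          - ((x + 1) * (x + 2) * (Real.log (x + 1) - Real.log (x + 2)))) ((k : ℝ) - 1) := by
  have hmain : StrictAntiOn (fun x : ℝ =>
        (x * (x + 1) * (Real.log x - Real.log (x + 1)))
          - ((x + 1) * (x + 2) * (Real.log (x + 1) - Real.log (x + 2))))
      (Set.Ici 1) := by
    apply strictAntiOn_of_deriv_neg (convex_Ici 1)
    · have hc : ∀ c : ℝ, 0 < c → ContinuousOn (fun x : ℝ => Real.log (x + c)) (Set.Ici 1) := by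
        intro c hcpos
        exact Real.continuousOn_log.comp (by fun_prop) (by
          intro x hx; simp only [Set.mem_Ici] at hx
          simp only [Set.mem_compl_iff, Set.mem_singleton_iff]; positivity)
      apply ContinuousOn.sub
      · exact (ContinuousOn.mul (by fun_prop) ((Real.continuousOn_log.mono (by
          intro x hx; simp only [Set.mem_Ici] at hx
          simp only [Set.mem_compl_iff, Set.mem_singleton_iff]; positivity)).sub (hc 1 one_pos)))
      · exact (ContinuousOn.mul (by fun_prop) ((hc 1 one_pos).sub (hc 2 two_pos)))
    · intro x hx
      rw [interior_Ici] at hx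
      have hx' : 1 < x := Set.mem_Ioi.mp hx
      have hx0 : (0:ℝ) < x := lt_trans one_pos hx'
      have hx1 : (0:ℝ) < x + 1 := by linarith
      have hx2 : (0:ℝ) < x + 2 := by linarith
      have hL0 : HasDerivAt (fun x : ℝ => Real.log x) x⁻¹ x := Real.hasDerivAt_log hx0.ne'
      have hL1 : HasDerivAt (fun x : ℝ => Real.log (x + 1)) (x + 1)⁻¹ x := by
        simpa [Function.comp_def] using (Real.hasDerivAt_log hx1.ne').comp x ((hasDerivAt_id x).add_const 1)
      have hL2 : HasDerivAt (fun x : ℝ => Real.log (x + 2)) (x + 2)⁻¹ x := by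
        simpa [Function.comp_def] using (Real.hasDerivAt_log hx2.ne').comp x ((hasDerivAt_id x).add_const 2)
      have hp1 : HasDerivAt (fun x : ℝ => x * (x + 1)) (2 * x + 1) x := by
        have := (hasDerivAt_id x).mul ((hasDerivAt_id x).add_const 1)
        exact this.congr_deriv (by simp [id_eq]; ring)
      have hp2 : HasDerivAt (fun x : ℝ => (x + 1) * (x + 2)) (2 * x + 3) x := by
        have := ((hasDerivAt_id x).add_const 1).mul ((hasDerivAt_id x).add_const 2)
        exact this.congr_deriv (by simp [id_eq]; ring)
      have hd : HasDerivAt (fun x : ℝ =>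
          (x * (x + 1) * (Real.log x - Real.log (x + 1)))
            - ((x + 1) * (x + 2) * (Real.log (x + 1) - Real.log (x + 2))))
          (((2 * x + 1) * (Real.log x - Real.log (x + 1)) + x * (x + 1) * (x⁻¹ - (x + 1)⁻¹))
            - ((2 * x + 3) * (Real.log (x + 1) - Real.log (x + 2))
              + (x + 1) * (x + 2) * ((x + 1)⁻¹ - (x + 2)⁻¹))) x :=
        (hp1.mul (hL0.sub hL1)).sub (hp2.mul (hL1.sub hL2))
      rw [hd.deriv]
      have e1 : x * (x + 1) * (x⁻¹ - (x + 1)⁻¹) = 1 := by field_simp; ring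
      have e2 : (x + 1) * (x + 2) * ((x + 1)⁻¹ - (x + 2)⁻¹) = 1 := by
        field_simp; ring
      rw [e1, e2]
      have hxm : x ∈ Set.Ici (1:ℝ) := le_of_lt hx'
      have hxm1 : x + 1 ∈ Set.Ici (1:ℝ) := by simp only [Set.mem_Ici]; linarith
      have hlt := hAnti hxm hxm1 (by linarith)
      simp only at hlt
      have hr : x + 1 + 1 = x + 2 := by ring
      rw [hr] at hlt
      nlinarith [hlt]
  refine ⟨hmain, ?_⟩
  intro k hk
  have hk2 : (2:ℝ) ≤ (k : ℝ) := by exact_mod_cast hk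
  have h1 : ((k:ℝ) - 1) ∈ Set.Ici (1:ℝ) := by simp [Set.mem_Ici]; linarith
  have h2 : (2 * (k:ℝ)) ∈ Set.Ici (1:ℝ) := by simp [Set.mem_Ici]; linarith
  exact hmain h1 h2 (by linarith)
end

section
/- For every integer k ≥ 2, the inequality (2k/(2k+1))^{2k(2k+1)/2} · ((2k+2)/(2k+1))^{(2k+1)(2k+2)/2} < ((k-1)/k)^{(k-1)k/2} · ((k+1)/k)^{k(k+1)/2} holds. -/
open Real

/-- Derivative of `t ↦ log(1+t) - log(1-t)` is `2/(1-t^2)`. -/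
private lemma hasDerivAt_logdiff (t : ℝ) (h1 : -1 < t) (h2 : t < 1) :
    HasDerivAt (fun s : ℝ => Real.log (1 + s) - Real.log (1 - s)) (2 / (1 - t ^ 2)) t := by
  have hp : (0:ℝ) < 1 + t := by linarith
  have hm : (0:ℝ) < 1 - t := by linarith
  have hA : HasDerivAt (fun s : ℝ => Real.log (1 + s)) (1 / (1 + t)) t := by
    have h := ((hasDerivAt_id t).const_add 1).log (by positivity)
    simpa using h
  have hB : HasDerivAt (fun s : ℝ => Real.log (1 - s)) ((-1) / (1 - t)) t := by
    have h := (((hasDerivAt_id t).neg).const_add 1).log (by positivity)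
    simpa [sub_eq_add_neg] using h
  have h := hA.sub hB
  have hden : (1:ℝ) - t ^ 2 ≠ 0 := by nlinarith
  refine h.congr_deriv ?_
  field_simp
  ring

/-- Upper bound: `log((1+u)/(1-u)) ≤ (2u - (4/3)u³)/(1-u²)` for `0 ≤ u < 1`. -/
private lemma log_upper (u : ℝ) (hu0 : 0 ≤ u) (hu1 : u < 1) :
    Real.log (1 + u) - Real.log (1 - u) ≤ (2*u - 4/3*u^3) / (1 - u^2) := by
  set g : ℝ → ℝ := fun t => (2*t - 4/3*t^3) / (1 - t^2) - (Real.log (1 + t) - Real.log (1 - t))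
    with hg
  have hderiv : ∀ t ∈ Set.Ioo (-1:ℝ) 1,
      HasDerivAt g ((4/3*t^4) / (1 - t^2)^2) t := by
    intro t ht
    obtain ⟨ht1, ht2⟩ := ht
    have hden : (1:ℝ) - t^2 ≠ 0 := by nlinarith
    have hN : HasDerivAt (fun s : ℝ => 2*s - 4/3*s^3) (2 - 4*t^2) t := by
      have h := ((hasDerivAt_id t).const_mul 2).sub ((hasDerivAt_pow 3 t).const_mul (4/3))
      refine h.congr_deriv ?_
      push_cast
      ring
    have hD : HasDerivAt (fun s : ℝ => 1 - s^2) (-(2*t)) t := by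
      have h := (hasDerivAt_const t (1:ℝ)).sub (hasDerivAt_pow 2 t)
      refine h.congr_deriv ?_
      push_cast
      ring
    have hfrac := hN.div hD hden
    have h := hfrac.sub (hasDerivAt_logdiff t ht1 ht2)
    refine h.congr_deriv ?_
    field_simp
    ring
  have hmono : MonotoneOn g (Set.Icc 0 u) := by
    apply monotoneOn_of_deriv_nonneg (convex_Icc 0 u)
    · apply ContinuousOn.sub
      · apply ContinuousOn.div (by fun_prop) (by fun_prop)
        intro t ht
        obtain ⟨ht1, ht2⟩ := ht
        nlinarith
      · apply ContinuousOn.sub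
        · apply ContinuousOn.log (by fun_prop)
          intro t ht; obtain ⟨ht1, ht2⟩ := ht; nlinarith
        · apply ContinuousOn.log (by fun_prop)
          intro t ht; obtain ⟨ht1, ht2⟩ := ht; nlinarith
    · intro t ht
      rw [interior_Icc] at ht
      obtain ⟨ht1, ht2⟩ := ht
      exact (hderiv t ⟨by linarith, by linarith⟩).differentiableAt.differentiableWithinAt
    · intro t ht
      rw [interior_Icc] at ht
      obtain ⟨ht1, ht2⟩ := ht
      rw [(hderiv t ⟨by linarith, by linarith⟩).deriv]
      positivity
  have h0 : g 0 = 0 := by simp [hg]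
  have := hmono (Set.left_mem_Icc.mpr hu0) (Set.right_mem_Icc.mpr hu0) hu0
  rw [h0] at this
  simp only [hg] at this
  linarith

/-- Lower bound: `log((1+u)/(1-u)) ≥ (2u - (4/3)u³ - (2/7)u⁵)/(1-u²)` for `0 ≤ u ≤ 1/3`. -/
private lemma log_lower (u : ℝ) (hu0 : 0 ≤ u) (hu1 : u ≤ 1/3) :
    (2*u - 4/3*u^3 - 2/7*u^5) / (1 - u^2) ≤ Real.log (1 + u) - Real.log (1 - u) := by
  set g : ℝ → ℝ := fun t =>
      (Real.log (1 + t) - Real.log (1 - t)) - (2*t - 4/3*t^3 - 2/7*t^5) / (1 - t^2)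
    with hg
  have hderiv : ∀ t ∈ Set.Ioo (-(1/3):ℝ) (1/2),
      HasDerivAt g ((2/21*t^4 - 6/7*t^6) / (1 - t^2)^2) t := by
    intro t ht
    obtain ⟨ht1, ht2⟩ := ht
    have hden : (1:ℝ) - t^2 ≠ 0 := by nlinarith
    have hN : HasDerivAt (fun s : ℝ => 2*s - 4/3*s^3 - 2/7*s^5) (2 - 4*t^2 - 10/7*t^4) t := by
      have h := (((hasDerivAt_id t).const_mul 2).sub ((hasDerivAt_pow 3 t).const_mul (4/3))).sub
        ((hasDerivAt_pow 5 t).const_mul (2/7))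
      refine h.congr_deriv ?_
      push_cast
      ring
    have hD : HasDerivAt (fun s : ℝ => 1 - s^2) (-(2*t)) t := by
      have h := (hasDerivAt_const t (1:ℝ)).sub (hasDerivAt_pow 2 t)
      refine h.congr_deriv ?_
      push_cast
      ring
    have hfrac := hN.div hD hden
    have h := (hasDerivAt_logdiff t (by linarith) (by linarith)).sub hfrac
    refine h.congr_deriv ?_
    field_simp
    ring
  have hmono : MonotoneOn g (Set.Icc 0 u) := by
    apply monotoneOn_of_deriv_nonneg (convex_Icc 0 u)
    · apply ContinuousOn.sub
      · apply ContinuousOn.sub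
        · apply ContinuousOn.log (by fun_prop)
          intro t ht; obtain ⟨ht1, ht2⟩ := ht; nlinarith
        · apply ContinuousOn.log (by fun_prop)
          intro t ht; obtain ⟨ht1, ht2⟩ := ht; nlinarith
      · apply ContinuousOn.div (by fun_prop) (by fun_prop)
        intro t ht
        obtain ⟨ht1, ht2⟩ := ht
        nlinarith
    · intro t ht
      rw [interior_Icc] at ht
      obtain ⟨ht1, ht2⟩ := ht
      exact (hderiv t ⟨by linarith, by linarith⟩).differentiableAt.differentiableWithinAt
    · intro t ht
      rw [interior_Icc] at ht
      obtain ⟨ht1, ht2⟩ := ht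
      rw [(hderiv t ⟨by linarith, by linarith⟩).deriv]
      have htu : t < 1/3 := lt_of_lt_of_le ht2 hu1
      have h9 : (0:ℝ) ≤ 1 - 9*t^2 := by nlinarith
      have h10 := mul_nonneg (pow_nonneg ht1.le 4) h9
      apply div_nonneg (by nlinarith) (by positivity)
  have h0 : g 0 = 0 := by simp [hg]
  have := hmono (Set.left_mem_Icc.mpr hu0) (Set.right_mem_Icc.mpr hu0) hu0
  rw [h0] at this
  simp only [hg] at this
  linarith

/-- With `u = 1/(2x+1)`, we have `log(x+1) - log x = log(1+u) - log(1-u)`. -/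
private lemma log_succ_eq (x : ℝ) (hx : 0 < x) :
    Real.log (x+1) - Real.log x
      = Real.log (1 + 1/(2*x+1)) - Real.log (1 - 1/(2*x+1)) := by
  have h1 : (0:ℝ) < 2*x+1 := by linarith
  have e1 : (1:ℝ) + 1/(2*x+1) = (2*x+2)/(2*x+1) := by
    field_simp
    try ring
  have e2 : (1:ℝ) - 1/(2*x+1) = (2*x)/(2*x+1) := by
    field_simp
    try ring
  rw [e1, e2, Real.log_div (by positivity) (by positivity),
    Real.log_div (by positivity) (by positivity)]
  have e3 : (2:ℝ)*x+2 = 2*(x+1) := by ring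
  have e4 : Real.log (2*x+2) = Real.log 2 + Real.log (x+1) := by
    rw [e3, Real.log_mul (by norm_num) (by positivity)]
  have e5 : Real.log (2*x) = Real.log 2 + Real.log x := by
    rw [Real.log_mul (by norm_num) (by positivity)]
  rw [e4, e5]
  ring

/-- Lower bound for `f(x) = x(x+1)(log x - log(x+1))`. -/
private lemma f_lb (x : ℝ) (hx : 1 ≤ x) :
    -(x + 1/2) + 1/(3*(2*x+1)) ≤ x*(x+1)*(Real.log x - Real.log (x+1)) := by
  have hx0 : (0:ℝ) < x := by linarith
  have h1 : (0:ℝ) < 2*x+1 := by linarith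
  set u : ℝ := 1/(2*x+1) with hu
  have hu0 : 0 ≤ u := by positivity
  have hu3 : u ≤ 1/3 := by
    rw [hu, div_le_div_iff₀ h1 (by norm_num)]
    linarith
  have hub := log_upper u hu0 (by linarith)
  have heq := log_succ_eq x hx0
  have hxx : x*(x+1)*(Real.log x - Real.log (x+1))
      = -(x*(x+1)) * (Real.log (1+u) - Real.log (1-u)) := by
    rw [← heq]; ring
  rw [hxx]
  have hmul : -(x*(x+1)) * ((2*u - 4/3*u^3) / (1 - u^2)) = -(x + 1/2) + 1/(3*(2*x+1)) := by
    rw [hu]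
    have hne : (2*x+1) ≠ 0 := ne_of_gt h1
    have h4 : (x:ℝ) ≠ 0 := ne_of_gt hx0
    have h5 : (x:ℝ)+1 ≠ 0 := by positivity
    have h6 : ((2*x+1)^2 - 1 : ℝ) ≠ 0 := by nlinarith
    have h7 : (4*x^2 + 4*x : ℝ) ≠ 0 := by positivity
    field_simp [hne, h4, h5, h6, h7]
    ring_nf
    field_simp
    ring
  have hpos : 0 ≤ x*(x+1) := by positivity
  nlinarith [mul_le_mul_of_nonneg_left hub hpos]

/-- Upper bound for `f(x) = x(x+1)(log x - log(x+1))`. -/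
private lemma f_ub (x : ℝ) (hx : 1 ≤ x) :
    x*(x+1)*(Real.log x - Real.log (x+1))
      ≤ -(x + 1/2) + 1/(3*(2*x+1)) + 1/(14*(2*x+1)^3) := by
  have hx0 : (0:ℝ) < x := by linarith
  have h1 : (0:ℝ) < 2*x+1 := by linarith
  set u : ℝ := 1/(2*x+1) with hu
  have hu0 : 0 ≤ u := by positivity
  have hu3 : u ≤ 1/3 := by
    rw [hu, div_le_div_iff₀ h1 (by norm_num)]
    linarith
  have hlb := log_lower u hu0 hu3
  have heq := log_succ_eq x hx0
  have hxx : x*(x+1)*(Real.log x - Real.log (x+1))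
      = -(x*(x+1)) * (Real.log (1+u) - Real.log (1-u)) := by
    rw [← heq]; ring
  rw [hxx]
  have hmul : -(x*(x+1)) * ((2*u - 4/3*u^3 - 2/7*u^5) / (1 - u^2))
      = -(x + 1/2) + 1/(3*(2*x+1)) + 1/(14*(2*x+1)^3) := by
    rw [hu]
    have hne : (2*x+1) ≠ 0 := ne_of_gt h1
    have h4 : (x:ℝ) ≠ 0 := ne_of_gt hx0
    have h5 : (x:ℝ)+1 ≠ 0 := by positivity
    have h6 : ((2*x+1)^2 - 1 : ℝ) ≠ 0 := by nlinarith
    have h7 : (4*x^2 + 4*x : ℝ) ≠ 0 := by positivity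
    field_simp [hne, h4, h5, h6, h7]
    ring_nf
    field_simp
    ring
  have hpos : 0 ≤ x*(x+1) := by positivity
  nlinarith [mul_le_mul_of_nonneg_left hlb hpos]

/-- Inequality (3.5): for every integer `k ≥ 2`,
`(2k/(2k+1))^{2k(2k+1)/2} ((2k+2)/(2k+1))^{(2k+1)(2k+2)/2}
  < ((k-1)/k)^{(k-1)k/2} ((k+1)/k)^{k(k+1)/2}`. -/
theorem pyramid_comparison_inequality (k : ℕ) (hk : 2 ≤ k) :
    ((2 * k : ℝ) / (2 * k + 1)) ^ ((2 * (k : ℝ) * (2 * k + 1)) / 2)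
        * ((2 * (k : ℝ) + 2) / (2 * k + 1)) ^ (((2 * (k : ℝ) + 1) * (2 * k + 2)) / 2)
      < (((k : ℝ) - 1) / k) ^ ((((k : ℝ) - 1) * k) / 2)
        * (((k : ℝ) + 1) / k) ^ (((k : ℝ) * (k + 1)) / 2) := by
  have hK : (2:ℝ) ≤ (k:ℝ) := by exact_mod_cast hk
  set K : ℝ := (k:ℝ) with hKdef
  have hK0 : (0:ℝ) < K := by linarith
  have hb1pos : (0:ℝ) < 2*K/(2*K+1) := by positivity
  have hb2pos : (0:ℝ) < (2*K+2)/(2*K+1) := by positivity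
  have hb3pos : (0:ℝ) < (K-1)/K := by
    apply div_pos (by linarith) hK0
  have hb4pos : (0:ℝ) < (K+1)/K := by positivity
  have hLpos : (0:ℝ) < (2*K/(2*K+1)) ^ ((2*K*(2*K+1))/2) * ((2*K+2)/(2*K+1)) ^ (((2*K+1)*(2*K+2))/2) :=
    mul_pos (Real.rpow_pos_of_pos hb1pos _) (Real.rpow_pos_of_pos hb2pos _)
  have hRpos : (0:ℝ) < ((K-1)/K) ^ (((K-1)*K)/2) * ((K+1)/K) ^ ((K*(K+1))/2) :=
    mul_pos (Real.rpow_pos_of_pos hb3pos _) (Real.rpow_pos_of_pos hb4pos _)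
  rw [← Real.log_lt_log_iff hLpos hRpos]
  rw [Real.log_mul (ne_of_gt (Real.rpow_pos_of_pos hb1pos _)) (ne_of_gt (Real.rpow_pos_of_pos hb2pos _)),
    Real.log_mul (ne_of_gt (Real.rpow_pos_of_pos hb3pos _)) (ne_of_gt (Real.rpow_pos_of_pos hb4pos _)),
    Real.log_rpow hb1pos, Real.log_rpow hb2pos, Real.log_rpow hb3pos, Real.log_rpow hb4pos,
    Real.log_div (by positivity) (by positivity), Real.log_div (by positivity) (by positivity),
    Real.log_div (by linarith : K - 1 ≠ 0) (ne_of_gt hK0),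
    Real.log_div (by positivity) (ne_of_gt hK0)]
  -- reduce to the four `f` bounds
  have hb1 := f_ub (2*K) (by linarith)
  have hb2 := f_lb (2*K+1) (by linarith)
  have hb3 := f_lb (K-1) (by linarith)
  have hb4 := f_ub K (by linarith)
  -- rewrite f arguments
  have e1 : (2*K)*((2*K)+1) = 2*K*(2*K+1) := by ring
  have key : (1/(3*(4*K+1)) + 1/(14*(4*K+1)^3) - 1/(3*(4*K+3)))
      < (1/(3*(2*K-1)) - 1/(3*(2*K+1)) - 1/(14*(2*K+1)^3)) := by
    have hA : (0:ℝ) < 4*K+1 := by linarith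
    have hB : (0:ℝ) < 4*K+3 := by linarith
    have hC : (0:ℝ) < 2*K-1 := by linarith
    have hD : (0:ℝ) < 2*K+1 := by linarith
    have ht : (0:ℝ) ≤ K - 2 := by linarith
    rw [← sub_pos]
    have hid : (1/(3*(2*K-1)) - 1/(3*(2*K+1)) - 1/(14*(2*K+1)^3))
        - (1/(3*(4*K+1)) + 1/(14*(4*K+1)^3) - 1/(3*(4*K+3)))
        = (4678254 + 11474454*(K-2) + 11715120*(K-2)^2 + 6372784*(K-2)^3
            + 1948016*(K-2)^4 + 317248*(K-2)^5 + 21504*(K-2)^6)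
          / (42*(4*K+1)^3*(4*K+3)*(2*K-1)*(2*K+1)^3) := by
      field_simp
      ring
    rw [hid]
    positivity
  -- combine: LHS log = f(2K)/... expressed via bounds
  have h2K1 : 2*(2*K)+1 = 4*K+1 := by ring
  have h2K3 : 2*(2*K+1)+1 = 4*K+3 := by ring
  have hKm : 2*(K-1)+1 = 2*K-1 := by ring
  rw [h2K1] at hb1
  rw [h2K3] at hb2
  rw [hKm] at hb3
  rw [show (2*K+1+1 : ℝ) = 2*K+2 from by ring] at hb2
  rw [show (K-1+1 : ℝ) = K from by ring] at hb3
  nlinarith [hb1, hb2, hb3, hb4, key]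
end

section
/- The function H(x) = -F(x) - F(d-x), where F(x) = x(x+1)(ln x - ln(x+1)) and d > 2 is fixed, is strictly increasing on [1, d/2) and strictly decreasing on (d/2, d-1]; consequently, over integers k with 1 ≤ k ≤ d-1, H(k) is maximized at k = floor(d/2) (equivalently at k = ceil(d/2)). -/
open Real Set

-- key inequality step: h u = u/2 - 1/(2(u+1)) - log(u+1) strictly increasing on Ici 0
noncomputable def haux (u : ℝ) : ℝ := u/2 - 1/(2*(u+1)) - Real.log (u+1)

lemma haux_deriv (u : ℝ) (hu : 0 ≤ u) :
    HasDerivAt haux (u^2/(2*(u+1)^2)) u := by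
  have h1 : (0:ℝ) < u + 1 := by linarith
  have hne : (2*(u+1)) ≠ 0 := by positivity
  have d1 : HasDerivAt (fun u : ℝ => u + 1) 1 u := (hasDerivAt_id u).add_const 1
  have d2 : HasDerivAt (fun u : ℝ => 2*(u+1)) 2 u := by
    simpa using d1.const_mul 2
  have d3 : HasDerivAt (fun u : ℝ => 1/(2*(u+1))) (-(2/(2*(u+1))^2)) u := by
    simpa [one_div, neg_div] using d2.fun_inv hne
  have d4 : HasDerivAt (fun u : ℝ => Real.log (u+1)) (1/(u+1)) u := by
    simpa using d1.log (ne_of_gt h1)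
  have d5 : HasDerivAt (fun u : ℝ => u/2) (1/2) u := by
    simpa using (hasDerivAt_id u).div_const 2
  have := (d5.fun_sub d3).fun_sub d4
  refine this.congr_deriv ?_
  field_simp
  ring

lemma haux_mono : StrictMonoOn haux (Set.Ici 0) := by
  apply strictMonoOn_of_deriv_pos (convex_Ici 0)
  · intro u hu
    exact ((haux_deriv u hu).continuousAt).continuousWithinAt
  · intro u hu
    rw [interior_Ici, Set.mem_Ioi] at hu
    rw [(haux_deriv u (le_of_lt hu)).deriv]
    positivity

lemma key (x : ℝ) (hx : 0 < x) :
    Real.log (x+1) - Real.log x < (2*x+1)/(2*x*(x+1)) := by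
  have h0 : haux 0 < haux (1/x) :=
    haux_mono (le_refl (0:ℝ)) (le_of_lt (by positivity : (0:ℝ) < 1/x)) (by positivity)
  have hx1 : (0:ℝ) < x + 1 := by linarith
  have e1 : Real.log (1/x + 1) = Real.log (x+1) - Real.log x := by
    rw [show 1/x + 1 = (x+1)/x by field_simp; ring, Real.log_div (by positivity) (ne_of_gt hx)]
  unfold haux at h0
  rw [e1] at h0
  have e2 : (1/x)/2 - 1/(2*(1/x+1)) - (0/2 - 1/(2*(0+1))) = (2*x+1)/(2*x*(x+1)) := by
    field_simp
    ring
  norm_num [Real.log_one] at h0 e2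
  linarith

noncomputable def Faux (x : ℝ) : ℝ := x * (x + 1) * (Real.log x - Real.log (x + 1))
noncomputable def phi (x : ℝ) : ℝ := (2*x+1) * (Real.log x - Real.log (x + 1)) + 1

lemma Faux_deriv (x : ℝ) (hx : 0 < x) : HasDerivAt Faux (phi x) x := by
  have hx1 : (0:ℝ) < x + 1 := by linarith
  have d1 : HasDerivAt (fun x : ℝ => x + 1) 1 x := (hasDerivAt_id x).add_const 1
  have dlog : HasDerivAt (fun x : ℝ => Real.log x - Real.log (x+1)) (1/x - 1/(x+1)) x := by
    simpa [one_div] using (Real.hasDerivAt_log (ne_of_gt hx)).fun_sub (d1.log (ne_of_gt hx1))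
  have dq : HasDerivAt (fun x : ℝ => x * (x+1)) (2*x+1) x := by
    have := (hasDerivAt_id x).fun_mul d1
    refine this.congr_deriv ?_
    simp [id]
    ring
  have := dq.fun_mul dlog
  refine this.congr_deriv ?_
  unfold phi
  field_simp
  ring

lemma phi_deriv (x : ℝ) (hx : 0 < x) :
    HasDerivAt phi (2*(Real.log x - Real.log (x+1)) + (2*x+1)*(1/x - 1/(x+1))) x := by
  have hx1 : (0:ℝ) < x + 1 := by linarith
  have d1 : HasDerivAt (fun x : ℝ => x + 1) 1 x := (hasDerivAt_id x).add_const 1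
  have dlog : HasDerivAt (fun x : ℝ => Real.log x - Real.log (x+1)) (1/x - 1/(x+1)) x := by
    simpa [one_div] using (Real.hasDerivAt_log (ne_of_gt hx)).fun_sub (d1.log (ne_of_gt hx1))
  have dl : HasDerivAt (fun x : ℝ => 2*x+1) 2 x := by
    simpa using ((hasDerivAt_id x).const_mul 2).add_const 1
  have := (dl.fun_mul dlog).add_const 1
  exact this

lemma phi_mono : StrictMonoOn phi (Set.Ioi 0) := by
  apply strictMonoOn_of_deriv_pos (convex_Ioi 0)
  · intro x hx
    exact (phi_deriv x hx).continuousAt.continuousWithinAt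
  · intro x hx
    rw [interior_Ioi, Set.mem_Ioi] at hx
    rw [(phi_deriv x hx).deriv]
    have hx1 : (0:ℝ) < x + 1 := by linarith
    have hk := key x hx
    have e : (2*x+1)*(1/x - 1/(x+1)) = 2 * ((2*x+1)/(2*x*(x+1))) := by
      field_simp; ring
    nlinarith [hk]

noncomputable def Haux (D : ℝ) (x : ℝ) : ℝ := -Faux x - Faux (D - x)

lemma Haux_deriv (D x : ℝ) (hx : 0 < x) (hxD : x < D) :
    HasDerivAt (Haux D) (phi (D - x) - phi x) x := by
  have h2 : HasDerivAt (fun x : ℝ => D - x) (-1) x := by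
    simpa using ((hasDerivAt_id x).const_sub D)
  have h3 : HasDerivAt (fun x : ℝ => Faux (D - x)) (phi (D-x) * (-1)) x :=
    (Faux_deriv (D-x) (by linarith)).comp x h2
  have := ((Faux_deriv x hx).neg).fun_sub h3
  refine this.congr_deriv ?_
  ring

lemma Haux_mono_Icc (D : ℝ) (hD : 2 < D) : StrictMonoOn (Haux D) (Set.Icc 1 (D/2)) := by
  apply strictMonoOn_of_deriv_pos (convex_Icc 1 (D/2))
  · intro x hx
    obtain ⟨h1, h2⟩ := hx
    exact (Haux_deriv D x (by linarith) (by linarith)).continuousAt.continuousWithinAt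
  · intro x hx
    rw [interior_Icc, Set.mem_Ioo] at hx
    obtain ⟨h1, h2⟩ := hx
    rw [(Haux_deriv D x (by linarith) (by linarith)).deriv]
    have := phi_mono (Set.mem_Ioi.mpr (by linarith : (0:ℝ) < x))
      (Set.mem_Ioi.mpr (by linarith : (0:ℝ) < D - x)) (by linarith : x < D - x)
    linarith

lemma Haux_anti_Icc (D : ℝ) (hD : 2 < D) : StrictAntiOn (Haux D) (Set.Icc (D/2) (D-1)) := by
  apply strictAntiOn_of_deriv_neg (convex_Icc (D/2) (D-1))
  · intro x hx
    obtain ⟨h1, h2⟩ := hx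
    exact (Haux_deriv D x (by linarith) (by linarith)).continuousAt.continuousWithinAt
  · intro x hx
    rw [interior_Icc, Set.mem_Ioo] at hx
    obtain ⟨h1, h2⟩ := hx
    rw [(Haux_deriv D x (by linarith) (by linarith)).deriv]
    have := phi_mono (Set.mem_Ioi.mpr (by linarith : (0:ℝ) < D - x))
      (Set.mem_Ioi.mpr (by linarith : (0:ℝ) < x)) (by linarith : D - x < x)
    linarith

lemma Haux_symm (D x : ℝ) : Haux D (D - x) = Haux D x := by
  unfold Haux
  rw [show D - (D - x) = x by ring]
  ring

/-- `H(x) = -F(x) - F(d-x)`, where `F(x) = x(x+1)(ln x - ln(x+1))`, is strictly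
increasing on `[1, d/2)` and strictly decreasing on `(d/2, d-1]`; consequently, over
integers `1 ≤ k ≤ d-1`, `H(k)` is maximized at `k = ⌊d/2⌋`. -/
theorem H_max_at_half (d : ℕ) (hd : 3 ≤ d) :
    StrictMonoOn (fun x : ℝ =>
        -(x * (x + 1) * (Real.log x - Real.log (x + 1)))
          - ((d - x) * ((d - x) + 1) * (Real.log (d - x) - Real.log ((d - x) + 1))))
      (Set.Ico 1 ((d : ℝ) / 2)) ∧
    StrictAntiOn (fun x : ℝ =>
        -(x * (x + 1) * (Real.log x - Real.log (x + 1)))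
          - ((d - x) * ((d - x) + 1) * (Real.log (d - x) - Real.log ((d - x) + 1))))
      (Set.Ioc ((d : ℝ) / 2) ((d : ℝ) - 1)) ∧
    ∀ k : ℕ, 1 ≤ k → k ≤ d - 1 →
      (fun x : ℝ =>
        -(x * (x + 1) * (Real.log x - Real.log (x + 1)))
          - ((d - x) * ((d - x) + 1) * (Real.log (d - x) - Real.log ((d - x) + 1)))) (k : ℝ)
      ≤ (fun x : ℝ =>
        -(x * (x + 1) * (Real.log x - Real.log (x + 1)))
          - ((d - x) * ((d - x) + 1) * (Real.log (d - x) - Real.log ((d - x) + 1))))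
          ((d / 2 : ℕ) : ℝ) := by
  have hD : (2:ℝ) < (d:ℝ) := by exact_mod_cast by omega
  refine ⟨(Haux_mono_Icc (d:ℝ) hD).mono Set.Ico_subset_Icc_self,
    (Haux_anti_Icc (d:ℝ) hD).mono Set.Ioc_subset_Icc_self, ?_⟩
  intro k hk1 hk2
  set m : ℕ := d / 2 with hm
  have hmono := (Haux_mono_Icc (d:ℝ) hD).monotoneOn
  have hmle : (m:ℝ) ≤ (d:ℝ)/2 := by
    rw [hm]
    exact_mod_cast Nat.cast_div_le
  have hm1 : (1:ℝ) ≤ (m:ℝ) := by exact_mod_cast by omega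
  have hmmem : (m:ℝ) ∈ Set.Icc (1:ℝ) ((d:ℝ)/2) := ⟨hm1, hmle⟩
  by_cases hkm : k ≤ m
  · have hkmem : (k:ℝ) ∈ Set.Icc (1:ℝ) ((d:ℝ)/2) := by
      constructor
      · exact_mod_cast hk1
      · calc (k:ℝ) ≤ (m:ℝ) := by exact_mod_cast hkm
          _ ≤ (d:ℝ)/2 := hmle
    exact hmono hkmem hmmem (by exact_mod_cast hkm)
  · push_neg at hkm
    set j : ℕ := d - k with hj
    have hkd : k ≤ d := by omega
    have hjcast : (j:ℝ) = (d:ℝ) - (k:ℝ) := by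
      rw [hj]; push_cast [hkd]; ring
    have hjm : j ≤ m := by omega
    have hj1 : 1 ≤ j := by omega
    have hjmem : (j:ℝ) ∈ Set.Icc (1:ℝ) ((d:ℝ)/2) := by
      constructor
      · exact_mod_cast hj1
      · calc (j:ℝ) ≤ (m:ℝ) := by exact_mod_cast hjm
          _ ≤ (d:ℝ)/2 := hmle
    have hsymm : Haux (d:ℝ) ((d:ℝ) - (k:ℝ)) = Haux (d:ℝ) (k:ℝ) := Haux_symm _ _
    calc Haux (d:ℝ) (k:ℝ) = Haux (d:ℝ) (j:ℝ) := by rw [hjcast, hsymm]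
      _ ≤ Haux (d:ℝ) (m:ℝ) := hmono hjmem hmmem (by exact_mod_cast hjm)
end

section
/- Let L(x) = (x(x-1)/2)(ln x - ln(x-1)) for x > 1. Then L''(x) < 0 on (1, ∞), i.e., L is strictly concave on (1,∞). -/
open Real Set

private lemma key_aux (v : ℝ) (hv : 0 ≤ v) :
    HasDerivAt (fun u : ℝ => u * (2 + u) / (2 * (1 + u)) - Real.log (1 + u))
      (v ^ 2 / (2 * (1 + v) ^ 2)) v := by
  have h1 : (0:ℝ) < 1 + v := by linarith
  have hnum : HasDerivAt (fun u : ℝ => u * (2 + u)) (1 * (2 + v) + v * (0 + 1)) v :=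
    (hasDerivAt_id v).mul ((hasDerivAt_const v 2).add (hasDerivAt_id v))
  have hden : HasDerivAt (fun u : ℝ => 2 * (1 + u)) (2 * (0 + 1)) v :=
    ((hasDerivAt_const v 1).add (hasDerivAt_id v)).const_mul 2
  have hlog : HasDerivAt (fun u : ℝ => Real.log (1 + u)) ((1 + v)⁻¹ * (0 + 1)) v :=
    (Real.hasDerivAt_log h1.ne').comp v ((hasDerivAt_const v 1).add (hasDerivAt_id v))
  have h := (hnum.div hden (by positivity)).sub hlog
  refine h.congr_deriv ?_
  field_simp
  ring

private lemma key_u (u : ℝ) (hu : 0 < u) :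
    Real.log (1 + u) < u * (2 + u) / (2 * (1 + u)) := by
  have hmono : StrictMonoOn
      (fun u : ℝ => u * (2 + u) / (2 * (1 + u)) - Real.log (1 + u)) (Ici 0) := by
    apply strictMonoOn_of_deriv_pos (convex_Ici 0)
    · intro v hv
      exact (key_aux v hv).continuousAt.continuousWithinAt
    · intro v hv
      rw [interior_Ici, mem_Ioi] at hv
      rw [(key_aux v hv.le).deriv]
      positivity
  have h0 := hmono self_mem_Ici (mem_Ici.mpr hu.le) hu
  simp only [zero_mul, add_zero, zero_div, Real.log_one, sub_zero] at h0
  linarith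

private lemma key_x (x : ℝ) (hx : 1 < x) :
    Real.log x - Real.log (x - 1) < (x - 1/2) / (x * (x - 1)) := by
  have hx0 : (0:ℝ) < x := by linarith
  have hx1 : (0:ℝ) < x - 1 := by linarith
  have hu : (0:ℝ) < 1 / (x - 1) := by positivity
  have h := key_u _ hu
  have e1 : (1:ℝ) + 1 / (x - 1) = x / (x - 1) := by field_simp; ring
  rw [e1, Real.log_div hx0.ne' hx1.ne'] at h
  have e2 : 1 / (x - 1) * (2 + 1 / (x - 1)) / (2 * (x / (x - 1)))
      = (x - 1/2) / (x * (x - 1)) := by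
    field_simp
    ring
  rw [e2] at h
  exact h

private lemma hasDerivAt_L (x : ℝ) (hx : 1 < x) :
    HasDerivAt (fun t : ℝ => t * (t - 1) / 2 * (Real.log t - Real.log (t - 1)))
      ((x - 1/2) * (Real.log x - Real.log (x - 1)) - 1/2) x := by
  have hx0 : (0:ℝ) < x := by linarith
  have hx1 : (0:ℝ) < x - 1 := by linarith
  have h1 : HasDerivAt (fun t : ℝ => t * (t - 1) / 2) ((1 * (x - 1) + x * 1) / 2) x :=
    ((hasDerivAt_id x).mul ((hasDerivAt_id x).sub_const 1)).div_const 2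
  have hlog1 : HasDerivAt (fun t : ℝ => Real.log t) x⁻¹ x := Real.hasDerivAt_log hx0.ne'
  have hlog2 : HasDerivAt (fun t : ℝ => Real.log (t - 1)) ((x - 1)⁻¹ * 1) x :=
    (Real.hasDerivAt_log hx1.ne').comp (h := fun t : ℝ => t - 1) x ((hasDerivAt_id x).sub_const 1)
  have h := h1.mul (hlog1.sub hlog2)
  refine h.congr_deriv ?_
  simp only [Pi.sub_apply]
  field_simp
  ring

private lemma hasDerivAt_L' (x : ℝ) (hx : 1 < x) :
    HasDerivAt (fun t : ℝ => (t - 1/2) * (Real.log t - Real.log (t - 1)) - 1/2)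
      ((Real.log x - Real.log (x - 1)) - (x - 1/2) / (x * (x - 1))) x := by
  have hx0 : (0:ℝ) < x := by linarith
  have hx1 : (0:ℝ) < x - 1 := by linarith
  have h1 : HasDerivAt (fun t : ℝ => t - 1/2) 1 x := (hasDerivAt_id x).sub_const _
  have hlog1 : HasDerivAt (fun t : ℝ => Real.log t) x⁻¹ x := Real.hasDerivAt_log hx0.ne'
  have hlog2 : HasDerivAt (fun t : ℝ => Real.log (t - 1)) ((x - 1)⁻¹ * 1) x :=
    (Real.hasDerivAt_log hx1.ne').comp (h := fun t : ℝ => t - 1) x ((hasDerivAt_id x).sub_const 1)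
  have h := (h1.mul (hlog1.sub hlog2)).sub_const (1/2)
  refine h.congr_deriv ?_
  simp only [Pi.sub_apply]
  field_simp
  ring

private lemma deriv2_L (x : ℝ) (hx : 1 < x) :
    deriv (deriv (fun t : ℝ => t * (t - 1) / 2 * (Real.log t - Real.log (t - 1)))) x
      = (Real.log x - Real.log (x - 1)) - (x - 1/2) / (x * (x - 1)) := by
  have heq : deriv (fun t : ℝ => t * (t - 1) / 2 * (Real.log t - Real.log (t - 1)))
      =ᶠ[nhds x] (fun t : ℝ => (t - 1/2) * (Real.log t - Real.log (t - 1)) - 1/2) := by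
    filter_upwards [isOpen_Ioi.eventually_mem (Set.mem_Ioi.mpr hx)] with y hy
    exact (hasDerivAt_L y hy).deriv
  rw [heq.deriv_eq]
  exact (hasDerivAt_L' x hx).deriv

private lemma deriv2_L_neg (x : ℝ) (hx : 1 < x) :
    deriv (deriv (fun t : ℝ => t * (t - 1) / 2 * (Real.log t - Real.log (t - 1)))) x < 0 := by
  rw [deriv2_L x hx]
  have := key_x x hx
  linarith

/-- `L(x) = (x(x-1)/2)(ln x - ln(x-1))` has negative second derivative on `(1, ∞)`,
i.e. `L` is strictly concave on `(1, ∞)`. -/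
theorem L_strictly_concave :
    (∀ x : ℝ, 1 < x →
      iteratedDeriv 2 (fun t : ℝ => t * (t - 1) / 2 * (Real.log t - Real.log (t - 1))) x < 0) ∧
    StrictConcaveOn ℝ (Set.Ioi 1)
      (fun t : ℝ => t * (t - 1) / 2 * (Real.log t - Real.log (t - 1))) := by
  constructor
  · intro x hx
    rw [show (2:ℕ) = 1 + 1 from rfl, iteratedDeriv_succ, iteratedDeriv_one]
    exact deriv2_L_neg x hx
  · apply strictConcaveOn_of_deriv2_neg (convex_Ioi 1)
    · intro y hy
      exact (hasDerivAt_L y hy).continuousAt.continuousWithinAt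
    · intro y hy
      rw [interior_Ioi] at hy
      simpa [Function.iterate_succ, Function.iterate_zero] using deriv2_L_neg y hy
end
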